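/- Let N be a positive integer, Λ ⊂ ℝ a nonempty closed bounded set with minimum λ_min, and L_1, ..., L_{N+1} exchangeable random functions from Λ to ℝ that are almost surely left-continuous and nondecreasing in λ. Let B : Λ → ℝ be left-continuous and nondecreasing with, for each i, almost surely L_i(λ) ≤ B(λ) for all λ ∈ Λ. Let φ : ℝ → ℝ be a real-valued OCE disutility function with associated OCE risk measure R[X] = inf_{s∈ℝ} (s + E[φ(X − s)]). Fix α, t ∈ ℝ and define L̃_{i,t}(λ) := t + φ(L_i(λ) − t), B̃_t(λ) := t + φ(B(λ) − t), h̃_t(λ) := (1/(N+1)) (B̃_t(λ) + Σ_{i=1}^N L̃_{i,t}(λ)), and the random set Λ̂_t := {λ ∈ Λ : h̃_t(λ) ≤ α}. Then for any measurable random variable λ̂ taking values in Λ with λ̂ ∈ Λ̂_t almost surely, it holds that R[L_{N+1}(λ̂)] ≤ α, assuming all relevant expectations exist. -/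

import Mathlib

open MeasureTheory Set

namespace OCEAux

/-- `tl φ t x = t + φ (x - t)`. -/
noncomputable def tl (φ : ℝ → ℝ) (t x : ℝ) : ℝ := t + φ (x - t)

lemma tl_mono {φ : ℝ → ℝ} (h : Monotone φ) (t : ℝ) : Monotone (tl φ t) :=
  fun _ _ hxy => add_le_add (le_refl t) (h (by linarith))

lemma tl_cont {φ : ℝ → ℝ} (h : Continuous φ) (t : ℝ) : Continuous (tl φ t) :=
  continuous_const.add (h.comp (continuous_id.sub continuous_const))

/-- A countable grid in `Λ`: for each rational `q`, the least element of `Λ` that is `≥ q`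
(or `lamMin` as a junk value). -/
noncomputable def pick (Λ : Set ℝ) (lamMin : ℝ) (q : ℚ) : ℝ :=
  if (q : ℝ) ≤ sSup Λ then sInf (Λ ∩ Ici (q : ℝ)) else lamMin

lemma pick_nonempty {Λ : Set ℝ} (hcl : IsClosed Λ) (hbdd : Bornology.IsBounded Λ)
    (hne : Λ.Nonempty) {q : ℚ} (h : (q : ℝ) ≤ sSup Λ) : (Λ ∩ Ici (q : ℝ)).Nonempty :=
  ⟨sSup Λ, hcl.csSup_mem hne hbdd.bddAbove, h⟩

lemma pick_mem {Λ : Set ℝ} (hcl : IsClosed Λ) (hbdd : Bornology.IsBounded Λ)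
    (hne : Λ.Nonempty) {lamMin : ℝ} (hmin : lamMin ∈ Λ) (q : ℚ) : pick Λ lamMin q ∈ Λ := by
  unfold pick
  split_ifs with h
  · exact inter_subset_left
      ((hcl.inter isClosed_Ici).csInf_mem (pick_nonempty hcl hbdd hne h)
        ((hbdd.subset inter_subset_left).bddBelow))
  · exact hmin

/-- Grid approximation from the left: any point of `Λ` can be approximated from the left
(within `ε`, possibly exactly) by a grid point. -/
lemma pick_approx {Λ : Set ℝ} (hcl : IsClosed Λ) (hbdd : Bornology.IsBounded Λ)
    {lamMin : ℝ} {lam : ℝ} (hlam : lam ∈ Λ) {ε : ℝ} (hε : 0 < ε) :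
    ∃ q : ℚ, lam - ε < pick Λ lamMin q ∧ pick Λ lamMin q ≤ lam := by
  obtain ⟨q, hq1, hq2⟩ := exists_rat_btwn (show lam - ε < lam by linarith)
  have hcond : (q : ℝ) ≤ sSup Λ := le_trans (le_of_lt hq2) (le_csSup hbdd.bddAbove hlam)
  have hne : (Λ ∩ Ici (q : ℝ)).Nonempty := ⟨lam, hlam, le_of_lt hq2⟩
  have hbb : BddBelow (Λ ∩ Ici (q : ℝ)) := (hbdd.subset inter_subset_left).bddBelow
  have hple : pick Λ lamMin q ≤ lam := by
    unfold pick; rw [if_pos hcond]; exact csInf_le hbb ⟨hlam, le_of_lt hq2⟩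
  have hqle : (q : ℝ) ≤ pick Λ lamMin q := by
    unfold pick; rw [if_pos hcond]; exact le_csInf hne (fun x hx => hx.2)
  exact ⟨q, lt_of_lt_of_le hq1 hqle, hple⟩

/-- The constraint functional: `tl (B λ) + ∑_{i ≠ j} tl (v i λ)`, written via subtraction. -/
noncomputable def cc (N : ℕ) (B φ : ℝ → ℝ) (t : ℝ) (j : Fin (N + 1))
    (v : Fin (N + 1) → ℝ → ℝ) (lam : ℝ) : ℝ :=
  tl φ t (B lam) + ∑ i, tl φ t (v i lam) - tl φ t (v j lam)

/-- The selected candidate point. -/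
noncomputable def pt (N : ℕ) (Λ : Set ℝ) (lamMin : ℝ) (B φ : ℝ → ℝ) (t α : ℝ)
    (j : Fin (N + 1)) (v : Fin (N + 1) → ℝ → ℝ) (q : ℚ) : ℝ :=
  if cc N B φ t j v (pick Λ lamMin q) ≤ ((N : ℝ) + 1) * α then pick Λ lamMin q else lamMin

/-- The (capped) supremum of `tl (v j ·)` over grid points feasible for constraint `j`. -/
noncomputable def G (N : ℕ) (Λ : Set ℝ) (lamMin : ℝ) (B φ : ℝ → ℝ) (t α : ℝ)
    (j : Fin (N + 1)) (v : Fin (N + 1) → ℝ → ℝ) : ℝ :=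
  ⨆ q : ℚ, min (tl φ t (B (sSup Λ))) (tl φ t (v j (pt N Λ lamMin B φ t α j v q)))

end OCEAux

namespace OCEAux

variable {N : ℕ} {Λ : Set ℝ} {lamMin : ℝ} {B φ : ℝ → ℝ} {t α : ℝ}

lemma cc_eq_erase (j : Fin (N + 1)) (v : Fin (N + 1) → ℝ → ℝ) (lam : ℝ) :
    cc N B φ t j v lam
      = tl φ t (B lam) + ∑ i ∈ Finset.univ.erase j, tl φ t (v i lam) := by
  unfold cc; rw [← Finset.add_sum_erase _ _ (Finset.mem_univ j)]; ring

lemma cc_monoOn (hBmono : MonotoneOn B Λ) (hφmono : Monotone φ)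
    {v : Fin (N + 1) → ℝ → ℝ} (hvmono : ∀ i, MonotoneOn (v i) Λ) (j : Fin (N + 1))
    {lam1 lam2 : ℝ} (h1 : lam1 ∈ Λ) (h2 : lam2 ∈ Λ) (h12 : lam1 ≤ lam2) :
    cc N B φ t j v lam1 ≤ cc N B φ t j v lam2 := by
  rw [cc_eq_erase, cc_eq_erase]
  exact add_le_add (tl_mono hφmono t (hBmono h1 h2 h12))
    (Finset.sum_le_sum fun i _ => tl_mono hφmono t (hvmono i h1 h2 h12))

lemma cc_swap (j : Fin (N + 1)) (v : Fin (N + 1) → ℝ → ℝ) (lam : ℝ) :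
    cc N B φ t (Fin.last N) (fun i => v (Equiv.swap j (Fin.last N) i)) lam
      = cc N B φ t j v lam := by
  unfold cc
  rw [Equiv.sum_comp (Equiv.swap j (Fin.last N)) (fun i => tl φ t (v i lam))]
  simp [Equiv.swap_apply_right]

lemma cc_meas (hφm : Measurable φ) (j : Fin (N + 1)) (lam : ℝ) :
    Measurable (fun v : Fin (N + 1) → ℝ → ℝ => cc N B φ t j v lam) := by
  have htlm : Measurable (tl φ t) :=
    measurable_const.add (hφm.comp (measurable_id.sub measurable_const))
  have hev : ∀ (i : Fin (N + 1)) (p : ℝ),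
      Measurable (fun v : Fin (N + 1) → ℝ → ℝ => v i p) :=
    fun i p => (measurable_pi_apply p).comp (measurable_pi_apply i)
  unfold cc
  exact (measurable_const.add
    (Finset.measurable_sum _ fun i _ => htlm.comp (hev i lam))).sub (htlm.comp (hev j lam))

lemma pt_mem (hcl : IsClosed Λ) (hbdd : Bornology.IsBounded Λ) (hne : Λ.Nonempty)
    (hminΛ : lamMin ∈ Λ) (j : Fin (N + 1)) (v : Fin (N + 1) → ℝ → ℝ) (q : ℚ) :
    pt N Λ lamMin B φ t α j v q ∈ Λ := by
  unfold pt; split_ifs with h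
  · exact pick_mem hcl hbdd hne hminΛ q
  · exact hminΛ

lemma pt_feas {j : Fin (N + 1)} {v : Fin (N + 1) → ℝ → ℝ}
    (hfeas0 : cc N B φ t j v lamMin ≤ ((N : ℝ) + 1) * α) (q : ℚ) :
    cc N B φ t j v (pt N Λ lamMin B φ t α j v q) ≤ ((N : ℝ) + 1) * α := by
  unfold pt; split_ifs with h
  · exact h
  · exact hfeas0

lemma le_G (j : Fin (N + 1)) (v : Fin (N + 1) → ℝ → ℝ) (q : ℚ) :
    min (tl φ t (B (sSup Λ))) (tl φ t (v j (pt N Λ lamMin B φ t α j v q)))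
      ≤ G N Λ lamMin B φ t α j v := by
  apply le_ciSup (f := fun q : ℚ =>
    min (tl φ t (B (sSup Λ))) (tl φ t (v j (pt N Λ lamMin B φ t α j v q))))
  refine ⟨tl φ t (B (sSup Λ)), ?_⟩
  rintro x ⟨q', rfl⟩
  exact min_le_left _ _

lemma G_le_cap (j : Fin (N + 1)) (v : Fin (N + 1) → ℝ → ℝ) :
    G N Λ lamMin B φ t α j v ≤ tl φ t (B (sSup Λ)) :=
  ciSup_le fun q => min_le_left _ _

lemma exists_q {j : Fin (N + 1)} {v : Fin (N + 1) → ℝ → ℝ} {x : ℝ}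
    (h : x < G N Λ lamMin B φ t α j v) :
    ∃ q : ℚ, x < min (tl φ t (B (sSup Λ)))
      (tl φ t (v j (pt N Λ lamMin B φ t α j v q))) := by
  unfold G at h; exact exists_lt_of_lt_ciSup h

lemma G_swap (j : Fin (N + 1)) (v : Fin (N + 1) → ℝ → ℝ) :
    G N Λ lamMin B φ t α j v
      = G N Λ lamMin B φ t α (Fin.last N) (fun i => v (Equiv.swap j (Fin.last N) i)) := by
  unfold G
  congr 1; funext q
  rw [show (fun i => v (Equiv.swap j (Fin.last N) i)) (Fin.last N) = v j from by
    simp [Equiv.swap_apply_right]]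
  congr 2
  unfold pt
  rw [cc_swap]

lemma G_meas (hφm : Measurable φ) (j : Fin (N + 1)) :
    Measurable (G N Λ lamMin B φ t α j) := by
  have htlm : Measurable (tl φ t) :=
    measurable_const.add (hφm.comp (measurable_id.sub measurable_const))
  have hev : ∀ (i : Fin (N + 1)) (p : ℝ),
      Measurable (fun v : Fin (N + 1) → ℝ → ℝ => v i p) :=
    fun i p => (measurable_pi_apply p).comp (measurable_pi_apply i)
  unfold G
  apply Measurable.iSup; intro q
  apply Measurable.min measurable_const
  have heq : (fun v : Fin (N + 1) → ℝ → ℝ => tl φ t (v j (pt N Λ lamMin B φ t α j v q)))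
      = fun v => if cc N B φ t j v (pick Λ lamMin q) ≤ ((N : ℝ) + 1) * α
          then tl φ t (v j (pick Λ lamMin q)) else tl φ t (v j lamMin) := by
    funext v; unfold pt; split_ifs <;> rfl
  rw [heq]
  exact Measurable.ite (measurableSet_le (cc_meas hφm j _) measurable_const)
    (htlm.comp (hev j _)) (htlm.comp (hev j _))

end OCEAux

namespace OCEAux

variable {N : ℕ} {Λ : Set ℝ} {lamMin : ℝ} {B φ : ℝ → ℝ} {t α : ℝ}

/-- Pointwise key inequality (A): the sum of the `G j` is at most `(N+1) α`. -/
lemma sum_G_le (hcl : IsClosed Λ) (hbdd : Bornology.IsBounded Λ) (hne : Λ.Nonempty)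
    (hminΛ : lamMin ∈ Λ) (hBmono : MonotoneOn B Λ) (hφmono : Monotone φ)
    {v : Fin (N + 1) → ℝ → ℝ}
    (hvmono : ∀ i, MonotoneOn (v i) Λ)
    (hvle : ∀ i, ∀ lam ∈ Λ, v i lam ≤ B lam)
    (hfeas0 : ∀ j, cc N B φ t j v lamMin ≤ ((N : ℝ) + 1) * α) :
    ∑ j, G N Λ lamMin B φ t α j v ≤ ((N : ℝ) + 1) * α := by
  refine le_of_forall_pos_le_add (fun ε hε => ?_)
  set ε' : ℝ := ε / ((N : ℝ) + 1) with hε'def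
  have hNpos : (0 : ℝ) < (N : ℝ) + 1 := by positivity
  have hε' : 0 < ε' := by positivity
  have hch : ∀ j : Fin (N + 1), ∃ q : ℚ, G N Λ lamMin B φ t α j v - ε' <
      min (tl φ t (B (sSup Λ))) (tl φ t (v j (pt N Λ lamMin B φ t α j v q))) :=
    fun j => exists_q (by linarith)
  choose qs hqs using hch
  set μ : Fin (N + 1) → ℝ := fun j => pt N Λ lamMin B φ t α j v (qs j) with hμdef
  have hμΛ : ∀ j, μ j ∈ Λ := fun j => pt_mem hcl hbdd hne hminΛ j v (qs j)
  have hμfeas : ∀ j, cc N B φ t j v (μ j) ≤ ((N : ℝ) + 1) * α :=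
    fun j => pt_feas (hfeas0 j) (qs j)
  obtain ⟨k, hk⟩ := Finite.exists_max μ
  have key : ∑ j, tl φ t (v j (μ j)) ≤ ((N : ℝ) + 1) * α := by
    have hstep : ∑ j, tl φ t (v j (μ j)) ≤ cc N B φ t k v (μ k) := by
      calc ∑ j, tl φ t (v j (μ j))
          = tl φ t (v k (μ k)) + ∑ j ∈ Finset.univ.erase k, tl φ t (v j (μ j)) :=
            (Finset.add_sum_erase _ _ (Finset.mem_univ k)).symm
        _ ≤ tl φ t (B (μ k)) + ∑ j ∈ Finset.univ.erase k, tl φ t (v j (μ k)) :=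
            add_le_add (tl_mono hφmono t (hvle k (μ k) (hμΛ k)))
              (Finset.sum_le_sum fun j _ =>
                tl_mono hφmono t (hvmono j (hμΛ j) (hμΛ k) (hk j)))
        _ = cc N B φ t k v (μ k) := (cc_eq_erase k v (μ k)).symm
    exact hstep.trans (hμfeas k)
  have hsum1 : ∑ j, G N Λ lamMin B φ t α j v ≤ ∑ j, (tl φ t (v j (μ j)) + ε') := by
    refine Finset.sum_le_sum fun j _ => ?_
    have h1 := hqs j
    have h2 : min (tl φ t (B (sSup Λ))) (tl φ t (v j (μ j))) ≤ tl φ t (v j (μ j)) :=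
      min_le_right _ _
    linarith
  have hcard : ∑ _j : Fin (N + 1), ε' = ((N : ℝ) + 1) * ε' := by
    rw [Finset.sum_const, Finset.card_fin]; push_cast; ring
  have : ∑ j, (tl φ t (v j (μ j)) + ε') = (∑ j, tl φ t (v j (μ j))) + ((N : ℝ) + 1) * ε' := by
    rw [Finset.sum_add_distrib, hcard]
  have hfin : ((N : ℝ) + 1) * ε' = ε := by
    rw [hε'def]; field_simp
  linarith

/-- Pointwise key inequality (B): the value at a feasible `lam` is at most `G last`. -/
lemma tl_le_G (hcl : IsClosed Λ) (hbdd : Bornology.IsBounded Λ) (hne : Λ.Nonempty)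
    (hminΛ : lamMin ∈ Λ) (hBmono : MonotoneOn B Λ) (hφmono : Monotone φ)
    (hφcont : Continuous φ)
    {v : Fin (N + 1) → ℝ → ℝ}
    (hvmono : ∀ i, MonotoneOn (v i) Λ)
    (hvle : ∀ i, ∀ lam ∈ Λ, v i lam ≤ B lam)
    {lam : ℝ} (hlam : lam ∈ Λ)
    (hvc : ContinuousWithinAt (v (Fin.last N)) (Λ ∩ Iic lam) lam)
    (hfeas : cc N B φ t (Fin.last N) v lam ≤ ((N : ℝ) + 1) * α) :
    tl φ t (v (Fin.last N) lam) ≤ G N Λ lamMin B φ t α (Fin.last N) v := by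
  refine le_of_forall_pos_le_add (fun ε hε => ?_)
  have hcwa : ContinuousWithinAt (fun x => tl φ t (v (Fin.last N) x)) (Λ ∩ Iic lam) lam :=
    (tl_cont hφcont t).continuousAt.comp_continuousWithinAt hvc
  rw [Metric.continuousWithinAt_iff] at hcwa
  obtain ⟨δ, hδ, hδ'⟩ := hcwa ε hε
  obtain ⟨q, hq1, hq2⟩ := pick_approx hcl hbdd hlam hδ (lamMin := lamMin)
  set p := pick Λ lamMin q with hpdef
  have hpΛ : p ∈ Λ := pick_mem hcl hbdd hne hminΛ q
  have hdist : dist p lam < δ := by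
    rw [Real.dist_eq, abs_of_nonpos (by linarith)]; linarith
  have hval : |tl φ t (v (Fin.last N) p) - tl φ t (v (Fin.last N) lam)| < ε := by
    have := hδ' ⟨hpΛ, hq2⟩ hdist
    rwa [Real.dist_eq] at this
  have hccp : cc N B φ t (Fin.last N) v p ≤ ((N : ℝ) + 1) * α :=
    (cc_monoOn hBmono hφmono hvmono (Fin.last N) hpΛ hlam hq2).trans hfeas
  have hpt : pt N Λ lamMin B φ t α (Fin.last N) v q = p := by
    unfold pt; rw [if_pos hccp]
  have hcap : tl φ t (v (Fin.last N) p) ≤ tl φ t (B (sSup Λ)) := by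
    have h1 : v (Fin.last N) p ≤ B p := hvle _ p hpΛ
    have h2 : B p ≤ B (sSup Λ) := hBmono hpΛ (hcl.csSup_mem hne hbdd.bddAbove)
      (le_csSup hbdd.bddAbove hpΛ)
    exact tl_mono hφmono t (h1.trans h2)
  have hG : tl φ t (v (Fin.last N) p) ≤ G N Λ lamMin B φ t α (Fin.last N) v := by
    have := le_G (Λ := Λ) (lamMin := lamMin) (B := B) (φ := φ) (t := t) (α := α)
      (Fin.last N) v q
    rw [hpt] at this
    rwa [min_eq_right hcap] at this
  have habs := abs_lt.mp hval
  linarith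

end OCEAux

open OCEAux in
theorem stmt_2
    {Ω : Type*} [MeasurableSpace Ω] (ℙ : Measure Ω) [IsProbabilityMeasure ℙ]
    (N : ℕ) (hN : 0 < N)
    (Λ : Set ℝ) (hΛne : Λ.Nonempty) (hΛclosed : IsClosed Λ)
    (hΛbdd : Bornology.IsBounded Λ)
    (lamMin : ℝ) (hMin : IsLeast Λ lamMin)
    (L : Fin (N + 1) → Ω → ℝ → ℝ)
    (hLmeas : ∀ i, Measurable fun ω => L i ω)
    (hExch : ∀ σ : Equiv.Perm (Fin (N + 1)),
      Measure.map (fun ω => fun i => L (σ i) ω) ℙ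
        = Measure.map (fun ω => fun i => L i ω) ℙ)
    (hLleftCont : ∀ i, ∀ᵐ ω ∂ℙ, ∀ lam ∈ Λ,
      ContinuousWithinAt (L i ω) (Λ ∩ Iic lam) lam)
    (hLmono : ∀ i, ∀ᵐ ω ∂ℙ, MonotoneOn (L i ω) Λ)
    (B : ℝ → ℝ)
    (hBleftCont : ∀ lam ∈ Λ, ContinuousWithinAt B (Λ ∩ Iic lam) lam)
    (hBmono : MonotoneOn B Λ)
    (hLB : ∀ i, ∀ᵐ ω ∂ℙ, ∀ lam ∈ Λ, L i ω lam ≤ B lam)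
    (φ : ℝ → ℝ)
    (hφmono : Monotone φ) (hφconv : ConvexOn ℝ univ φ)
    (hφlsc : LowerSemicontinuous φ) (hφ0 : φ 0 = 0) (hφsub : ∀ x : ℝ, x ≤ φ x)
    (α t : ℝ)
    (htilde : Ω → ℝ → ℝ)
    (hdef : ∀ ω lam, htilde ω lam =
      ((t + φ (B lam - t)) + ∑ i : Fin N, (t + φ (L i.castSucc ω lam - t))) / (N + 1))
    (lamHat : Ω → ℝ) (hlamHatMeas : Measurable lamHat)
    (hlamHatΛ : ∀ᵐ ω ∂ℙ, lamHat ω ∈ Λ)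
    (hlamHatIn : ∀ᵐ ω ∂ℙ, htilde ω (lamHat ω) ≤ α)
    (hInt : Integrable (fun ω => L (Fin.last N) ω (lamHat ω)) ℙ)
    (hIntφ : ∀ s : ℝ, Integrable (fun ω => φ (L (Fin.last N) ω (lamHat ω) - s)) ℙ) :
    (⨅ s : ℝ, (s + ∫ ω, φ (L (Fin.last N) ω (lamHat ω) - s) ∂ℙ)) ≤ α := by
  classical
  have hφcont : Continuous φ := hφconv.locallyLipschitz.continuous
  have hminΛ : lamMin ∈ Λ := hMin.1
  have hNpos : (0 : ℝ) < (N : ℝ) + 1 := by positivity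
  set A : ℝ := ((N : ℝ) + 1) * α with hAdef
  set Lv : Ω → (Fin (N + 1) → ℝ → ℝ) := fun ω i => L i ω with hLvdef
  have hLvmeas : Measurable Lv := measurable_pi_lambda _ hLmeas
  -- the last constraint functional is (N+1) * htilde
  have hccform : ∀ ω lam, cc N B φ t (Fin.last N) (Lv ω) lam = ((N : ℝ) + 1) * htilde ω lam := by
    intro ω lam
    rw [hdef]
    unfold OCEAux.cc OCEAux.tl
    rw [Fin.sum_univ_castSucc]
    have : ((N : ℝ) + 1) ≠ 0 := ne_of_gt hNpos
    field_simp
    ring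
  -- a.s. facts
  have hms : ∀ᵐ ω ∂ℙ, ∀ i, MonotoneOn (L i ω) Λ := ae_all_iff.mpr hLmono
  have hle : ∀ᵐ ω ∂ℙ, ∀ i, ∀ lam ∈ Λ, L i ω lam ≤ B lam := ae_all_iff.mpr hLB
  -- a.s., lamMin is feasible for the `last` constraint
  have hfeas_last : ∀ᵐ ω ∂ℙ, cc N B φ t (Fin.last N) (Lv ω) lamMin ≤ A := by
    filter_upwards [hms, hlamHatΛ, hlamHatIn] with ω hm hΛ hIn
    have h1 : cc N B φ t (Fin.last N) (Lv ω) lamMin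
        ≤ cc N B φ t (Fin.last N) (Lv ω) (lamHat ω) :=
      cc_monoOn hBmono hφmono (fun i => hm i) (Fin.last N) hminΛ hΛ (hMin.2 hΛ)
    rw [hccform ω (lamHat ω)] at h1
    calc cc N B φ t (Fin.last N) (Lv ω) lamMin ≤ ((N : ℝ) + 1) * htilde ω (lamHat ω) := h1
      _ ≤ A := by rw [hAdef]; nlinarith
  -- by exchangeability, lamMin is a.s. feasible for every constraint
  have hfeas_all : ∀ j : Fin (N + 1), ∀ᵐ ω ∂ℙ, cc N B φ t j (Lv ω) lamMin ≤ A := by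
    intro j
    have hset : MeasurableSet {v : Fin (N + 1) → ℝ → ℝ |
        cc N B φ t (Fin.last N) v lamMin ≤ A} :=
      measurableSet_le (cc_meas hφcont.measurable _ _) measurable_const
    have hswapmeas : Measurable (fun ω => fun i => L (Equiv.swap j (Fin.last N) i) ω) :=
      measurable_pi_lambda _ (fun i => hLmeas _)
    have h1 : ∀ᵐ v ∂(Measure.map (fun ω => fun i => L i ω) ℙ),
        cc N B φ t (Fin.last N) v lamMin ≤ A :=
      (ae_map_iff hLvmeas.aemeasurable hset).mpr hfeas_last
    rw [← hExch (Equiv.swap j (Fin.last N))] at h1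
    have h2 := (ae_map_iff hswapmeas.aemeasurable hset).mp h1
    filter_upwards [h2] with ω h
    rwa [cc_swap j (Lv ω) lamMin] at h
  have hfeas0 : ∀ᵐ ω ∂ℙ, ∀ j, cc N B φ t j (Lv ω) lamMin ≤ A := ae_all_iff.mpr hfeas_all
  -- the main functional
  set Gl : Ω → ℝ := fun ω => G N Λ lamMin B φ t α (Fin.last N) (Lv ω) with hGldef
  have hGlmeas : Measurable Gl := (G_meas hφcont.measurable (Fin.last N)).comp hLvmeas
  set g0 : Ω → ℝ := fun ω => t + φ (L (Fin.last N) ω (lamHat ω) - t) with hg0def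
  have hg0int : Integrable g0 ℙ := (integrable_const t).add (hIntφ t)
  -- (B): a.s. g0 ≤ Gl
  have hBae : ∀ᵐ ω ∂ℙ, g0 ω ≤ Gl ω := by
    filter_upwards [hms, hle, hLleftCont (Fin.last N), hlamHatΛ, hlamHatIn]
      with ω hm hl hlc hΛ hIn
    have hfeas : cc N B φ t (Fin.last N) (Lv ω) (lamHat ω) ≤ ((N : ℝ) + 1) * α := by
      rw [hccform]; nlinarith
    exact tl_le_G hΛclosed hΛbdd hΛne hminΛ hBmono hφmono hφcont
      (fun i => hm i) (fun i => hl i) hΛ (hlc (lamHat ω) hΛ) hfeas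
  -- Gl is integrable (sandwiched)
  have hGlub : ∀ ω, Gl ω ≤ tl φ t (B (sSup Λ)) := fun ω => G_le_cap _ _
  have hGlint : Integrable Gl ℙ := by
    refine Integrable.mono' (g := fun ω => |g0 ω| + |tl φ t (B (sSup Λ))|)
      (hg0int.abs.add (integrable_const _)) hGlmeas.aestronglyMeasurable ?_
    filter_upwards [hBae] with ω h
    rw [Real.norm_eq_abs, abs_le]
    constructor
    · calc -(|g0 ω| + |tl φ t (B (sSup Λ))|) ≤ -|g0 ω| := by
            have := abs_nonneg (tl φ t (B (sSup Λ))); linarith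
        _ ≤ g0 ω := neg_abs_le _
        _ ≤ Gl ω := h
    · calc Gl ω ≤ tl φ t (B (sSup Λ)) := hGlub ω
        _ ≤ |tl φ t (B (sSup Λ))| := le_abs_self _
        _ ≤ |g0 ω| + |tl φ t (B (sSup Λ))| := by linarith [abs_nonneg (g0 ω)]
  -- exchangeability: each G j has the same integral (and integrability) as Gl
  have hjint : ∀ j : Fin (N + 1), Integrable (fun ω => G N Λ lamMin B φ t α j (Lv ω)) ℙ ∧
      ∫ ω, G N Λ lamMin B φ t α j (Lv ω) ∂ℙ = ∫ ω, Gl ω ∂ℙ := by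
    intro j
    have hswapmeas : Measurable (fun ω => fun i => L (Equiv.swap j (Fin.last N) i) ω) :=
      measurable_pi_lambda _ (fun i => hLmeas _)
    have hfun : (fun ω => G N Λ lamMin B φ t α j (Lv ω))
        = fun ω => G N Λ lamMin B φ t α (Fin.last N)
            (fun i => L (Equiv.swap j (Fin.last N) i) ω) := by
      funext ω; exact G_swap j (Lv ω)
    have hGsm : AEStronglyMeasurable (G N Λ lamMin B φ t α (Fin.last N))
        (Measure.map (fun ω => fun i => L (Equiv.swap j (Fin.last N) i) ω) ℙ) :=
      (G_meas hφcont.measurable (Fin.last N)).aestronglyMeasurable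
    have hGsm' : AEStronglyMeasurable (G N Λ lamMin B φ t α (Fin.last N))
        (Measure.map (fun ω => fun i => L i ω) ℙ) :=
      (G_meas hφcont.measurable (Fin.last N)).aestronglyMeasurable
    constructor
    · rw [hfun]
      have h := integrable_map_measure hGsm hswapmeas.aemeasurable
      have h' := integrable_map_measure hGsm' hLvmeas.aemeasurable
      rw [hExch (Equiv.swap j (Fin.last N))] at h
      exact h.mp (h'.mpr hGlint)
    · rw [hfun]
      rw [← integral_map hswapmeas.aemeasurable hGsm, hExch (Equiv.swap j (Fin.last N)),
        integral_map hLvmeas.aemeasurable hGsm']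
  -- (A): sum bound
  have hsumae : ∀ᵐ ω ∂ℙ, ∑ j, G N Λ lamMin B φ t α j (Lv ω) ≤ A := by
    filter_upwards [hms, hle, hfeas0] with ω hm hl hf
    exact sum_G_le hΛclosed hΛbdd hΛne hminΛ hBmono hφmono
      (fun i => hm i) (fun i => hl i) hf
  have hsumint : Integrable (fun ω => ∑ j, G N Λ lamMin B φ t α j (Lv ω)) ℙ :=
    integrable_finset_sum _ (fun j _ => (hjint j).1)
  have hintsum : ∫ ω, (∑ j, G N Λ lamMin B φ t α j (Lv ω)) ∂ℙ ≤ A := by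
    calc ∫ ω, (∑ j, G N Λ lamMin B φ t α j (Lv ω)) ∂ℙ ≤ ∫ _ω, A ∂ℙ :=
          integral_mono_ae hsumint (integrable_const A) hsumae
      _ = A := by simp
  have hintsum2 : ∫ ω, (∑ j, G N Λ lamMin B φ t α j (Lv ω)) ∂ℙ
      = ((N : ℝ) + 1) * ∫ ω, Gl ω ∂ℙ := by
    rw [integral_finset_sum _ (fun j _ => (hjint j).1)]
    have : ∀ j ∈ Finset.univ, ∫ ω, G N Λ lamMin B φ t α j (Lv ω) ∂ℙ = ∫ ω, Gl ω ∂ℙ :=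
      fun j _ => (hjint j).2
    rw [Finset.sum_congr rfl this, Finset.sum_const, Finset.card_fin]
    push_cast; ring
  have hGlavg : ∫ ω, Gl ω ∂ℙ ≤ α := by
    rw [hintsum2] at hintsum
    rw [hAdef] at hintsum
    nlinarith
  have hg0avg : ∫ ω, g0 ω ∂ℙ ≤ α :=
    le_trans (integral_mono_ae hg0int hGlint hBae) hGlavg
  have hg0eq : ∫ ω, g0 ω ∂ℙ = t + ∫ ω, φ (L (Fin.last N) ω (lamHat ω) - t) ∂ℙ := by
    rw [hg0def]
    rw [integral_add (integrable_const t) (hIntφ t)]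
    simp
  -- the infimum is bounded below, and its value at s = t concludes
  have hbddbelow : BddBelow (range fun s : ℝ =>
      s + ∫ ω, φ (L (Fin.last N) ω (lamHat ω) - s) ∂ℙ) := by
    refine ⟨∫ ω, L (Fin.last N) ω (lamHat ω) ∂ℙ, ?_⟩
    rintro x ⟨s, rfl⟩
    have h1 : ∫ ω, (L (Fin.last N) ω (lamHat ω) - s) ∂ℙ
        ≤ ∫ ω, φ (L (Fin.last N) ω (lamHat ω) - s) ∂ℙ :=
      integral_mono (hInt.sub (integrable_const s)) (hIntφ s) (fun ω => hφsub _)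
    rw [integral_sub hInt (integrable_const s)] at h1
    simp only [integral_const, measure_univ, probReal_univ, ENNReal.toReal_one, one_smul, smul_eq_mul,
      one_mul] at h1
    show (∫ ω, L (Fin.last N) ω (lamHat ω) ∂ℙ)
      ≤ s + ∫ ω, φ (L (Fin.last N) ω (lamHat ω) - s) ∂ℙ
    linarith
  calc (⨅ s : ℝ, (s + ∫ ω, φ (L (Fin.last N) ω (lamHat ω) - s) ∂ℙ))
      ≤ t + ∫ ω, φ (L (Fin.last N) ω (lamHat ω) - t) ∂ℙ := ciInf_le hbddbelow t
    _ = ∫ ω, g0 ω ∂ℙ := hg0eq.symm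
    _ ≤ α := hg0avg
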